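/- Let I ⊆ ℝ be an open interval and let ρ : I → ℝ be three times differentiable with ρ(t) > 0 and ρ'(t) ≠ 0 for all t ∈ I. If ρ satisfies ρ'''(t) ρ'(t) ρ(t)² − 3 ρ''(t)² ρ(t)² + ρ''(t) ρ'(t)² ρ(t) + ρ'(t)⁴ = 0 for all t ∈ I, then there exist real constants α, β, γ such that t = (1/2) α ρ(t)² + β log ρ(t) + γ for all t ∈ I. -/

import Mathlib

lemma constOn {I : Set ℝ} (hIopen : IsOpen I) (hIconv : Convex ℝ I) {f : ℝ → ℝ}
    (hf : ∀ t ∈ I, HasDerivAt f 0 t) {x y : ℝ} (hx : x ∈ I) (hy : y ∈ I) : f x = f y := by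
  apply hIconv.is_const_of_fderivWithin_eq_zero
    (fun t ht => ((hf t ht).differentiableAt).differentiableWithinAt) _ hx hy
  intro t ht
  rw [fderivWithin_of_isOpen hIopen ht, (hf t ht).hasFDerivAt.fderiv]
  ext
  simp

theorem stmt_9 (I : Set ℝ) (hIopen : IsOpen I) (hIconv : Convex ℝ I)
    (ρ : ℝ → ℝ)
    (hpos : ∀ t ∈ I, 0 < ρ t)
    (hρ' : ∀ t ∈ I, deriv ρ t ≠ 0)
    (hρ1 : ∀ t ∈ I, DifferentiableAt ℝ ρ t)
    (hρ2 : ∀ t ∈ I, DifferentiableAt ℝ (deriv ρ) t)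
    (hρ3 : ∀ t ∈ I, DifferentiableAt ℝ (deriv (deriv ρ)) t)
    (hode : ∀ t ∈ I,
      deriv (deriv (deriv ρ)) t * deriv ρ t * (ρ t) ^ 2
        - 3 * (deriv (deriv ρ) t) ^ 2 * (ρ t) ^ 2
        + deriv (deriv ρ) t * (deriv ρ t) ^ 2 * ρ t
        + (deriv ρ t) ^ 4 = 0) :
    ∃ α β γ : ℝ, ∀ t ∈ I,
      t = (1 / 2) * α * (ρ t) ^ 2 + β * Real.log (ρ t) + γ := by
  rcases Set.eq_empty_or_nonempty I with hIe | ⟨t₀, ht₀⟩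
  · exact ⟨0, 0, 0, by simp [hIe]⟩
  -- Step 1: A = (ρ'² - ρρ'')/(ρρ'³) is constant on I
  have hAder : ∀ t ∈ I, HasDerivAt
      (fun s => ((deriv ρ s) ^ 2 - ρ s * deriv (deriv ρ) s) / (ρ s * (deriv ρ s) ^ 3)) 0 t := by
    intro t ht
    have hp := hpos t ht
    have hp1 := hρ' t ht
    have h1 : HasDerivAt ρ (deriv ρ t) t := (hρ1 t ht).hasDerivAt
    have h2 : HasDerivAt (deriv ρ) (deriv (deriv ρ) t) t := (hρ2 t ht).hasDerivAt
    have h3 : HasDerivAt (deriv (deriv ρ)) (deriv (deriv (deriv ρ)) t) t := (hρ3 t ht).hasDerivAt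
    have hN : HasDerivAt (fun s => (deriv ρ s) ^ 2 - ρ s * deriv (deriv ρ) s)
        (2 * deriv ρ t ^ 1 * deriv (deriv ρ) t
          - (deriv ρ t * deriv (deriv ρ) t + ρ t * deriv (deriv (deriv ρ)) t)) t := by
      exact ((h2.pow 2).sub (h1.mul h3))
    have hD : HasDerivAt (fun s => ρ s * (deriv ρ s) ^ 3)
        (deriv ρ t * (deriv ρ t) ^ 3 + ρ t * (3 * deriv ρ t ^ 2 * deriv (deriv ρ) t)) t := by
      exact h1.mul (h2.pow 3)
    have hD0 : ρ t * (deriv ρ t) ^ 3 ≠ 0 := by positivity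
    have h := hN.div hD hD0
    have hzero : ((2 * deriv ρ t ^ 1 * deriv (deriv ρ) t
          - (deriv ρ t * deriv (deriv ρ) t + ρ t * deriv (deriv (deriv ρ)) t))
          * (ρ t * (deriv ρ t) ^ 3)
        - ((deriv ρ t) ^ 2 - ρ t * deriv (deriv ρ) t)
          * (deriv ρ t * (deriv ρ t) ^ 3 + ρ t * (3 * deriv ρ t ^ 2 * deriv (deriv ρ) t)))
          / (ρ t * (deriv ρ t) ^ 3) ^ 2 = 0 := by
      rw [div_eq_zero_iff]; left
      linear_combination (-(deriv ρ t) ^ 2) * hode t ht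
    rwa [hzero] at h
  have hAconst : ∀ t ∈ I,
      ((deriv ρ t) ^ 2 - ρ t * deriv (deriv ρ) t) / (ρ t * (deriv ρ t) ^ 3)
      = ((deriv ρ t₀) ^ 2 - ρ t₀ * deriv (deriv ρ) t₀) / (ρ t₀ * (deriv ρ t₀) ^ 3) :=
    fun t ht => constOn hIopen hIconv hAder ht ht₀
  set c : ℝ := ((deriv ρ t₀) ^ 2 - ρ t₀ * deriv (deriv ρ) t₀) / (ρ t₀ * (deriv ρ t₀) ^ 3) with hc
  clear_value c
  set α : ℝ := c / 2 with hα
  -- key algebraic consequence: ρ'² - ρρ'' = c ρ ρ'³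
  have hkey : ∀ t ∈ I, (deriv ρ t) ^ 2 - ρ t * deriv (deriv ρ) t = c * (ρ t * (deriv ρ t) ^ 3) := by
    intro t ht
    have hD0 : ρ t * (deriv ρ t) ^ 3 ≠ 0 := by
      have := hpos t ht; have := hρ' t ht; positivity
    exact (div_eq_iff hD0).mp (hAconst t ht)
  -- Step 2: B = ρ/ρ' - α ρ² is constant on I
  have hBder : ∀ t ∈ I, HasDerivAt (fun s => ρ s / deriv ρ s - α * (ρ s) ^ 2) 0 t := by
    intro t ht
    have hp := hpos t ht
    have hp1 := hρ' t ht
    have h1 : HasDerivAt ρ (deriv ρ t) t := (hρ1 t ht).hasDerivAt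
    have h2 : HasDerivAt (deriv ρ) (deriv (deriv ρ) t) t := (hρ2 t ht).hasDerivAt
    have hsq : HasDerivAt (fun s => (ρ s) ^ 2) (2 * ρ t * deriv ρ t) t := by
      simpa using h1.fun_pow 2
    have h := (h1.div h2 hp1).sub (hsq.const_mul α)
    have hzero : (deriv ρ t * deriv ρ t - ρ t * deriv (deriv ρ) t) / deriv ρ t ^ 2
        - α * (2 * ρ t * deriv ρ t) = 0 := by
      have hk := hkey t ht
      rw [sub_eq_zero, hα, div_eq_iff (pow_ne_zero 2 hp1)]
      linear_combination hk
    rwa [hzero] at h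
  set β : ℝ := ρ t₀ / deriv ρ t₀ - α * (ρ t₀) ^ 2 with hβ
  clear_value α
  have hBconst : ∀ t ∈ I, ρ t / deriv ρ t - α * (ρ t) ^ 2 = β :=
    fun t ht => constOn hIopen hIconv hBder ht ht₀
  clear_value β
  -- Step 3: G = ½αρ² + β log ρ - t is constant on I
  have hGder : ∀ t ∈ I, HasDerivAt
      (fun s => (1 / 2) * α * (ρ s) ^ 2 + β * Real.log (ρ s) - s) 0 t := by
    intro t ht
    have hp := hpos t ht
    have hp1 := hρ' t ht
    have h1 : HasDerivAt ρ (deriv ρ t) t := (hρ1 t ht).hasDerivAt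
    have hlog : HasDerivAt (fun s => Real.log (ρ s)) ((ρ t)⁻¹ * deriv ρ t) t :=
      (Real.hasDerivAt_log hp.ne').comp t h1
    have hsq : HasDerivAt (fun s => (ρ s) ^ 2) (2 * ρ t * deriv ρ t) t := by
      simpa using h1.fun_pow 2
    have h := ((hsq.const_mul ((1:ℝ)/2 * α)).add (hlog.const_mul β)).fun_sub (hasDerivAt_id t)
    simp only [id_eq] at h
    have hzero : (1:ℝ)/2 * α * (2 * ρ t * deriv ρ t) + β * ((ρ t)⁻¹ * deriv ρ t) - 1 = 0 := by
      have hb := hBconst t ht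
      rw [← hb]
      field_simp
      ring
    rwa [hzero] at h
  refine ⟨α, β, t₀ - ((1 / 2) * α * (ρ t₀) ^ 2 + β * Real.log (ρ t₀)), fun t ht => ?_⟩
  have := constOn hIopen hIconv hGder ht ht₀
  linarith [this]
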